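/- For every 2×2 real matrix A and every (θ,φ,r) ∈ ℝ × ℝ × (−π/4, π/4), the vector ξ_A · Φ(θ,φ,r) ∈ ℝ⁴ (which equals d/dt|_{t=0} exp(t ξ_A)·Φ(θ,φ,r)) satisfies ξ_A · Φ(θ,φ,r) = cot(π/4+r)·(∂ψ_A/∂θ)(θ,φ)·(∂Φ/∂θ)(θ,φ,r) − tan(π/4+r)·(∂ψ_A/∂φ)(θ,φ)·(∂Φ/∂φ)(θ,φ,r) + ψ_A(θ,φ)·(∂Φ/∂r)(θ,φ,r). (This is the explicit formula, in Fermi coordinates, for the Killing field of S³ generated by ξ_A.) -/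

import Mathlib

open Real Matrix

/-- The function `ψ_A` on the torus associated with a `2 × 2` matrix `A`. -/
noncomputable def psiFun (A : Matrix (Fin 2) (Fin 2) ℝ) (θ φ : ℝ) : ℝ :=
  A 0 0 * Real.cos θ * Real.cos φ + A 0 1 * Real.cos θ * Real.sin φ +
    A 1 0 * Real.sin θ * Real.cos φ + A 1 1 * Real.sin θ * Real.sin φ

/-- The antisymmetric `4 × 4` matrix `ξ_A = [[0, A], [−Aᵀ, 0]]`. -/
def xiMat (A : Matrix (Fin 2) (Fin 2) ℝ) : Matrix (Fin 4) (Fin 4) ℝ :=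
  !![0, 0, A 0 0, A 0 1;
     0, 0, A 1 0, A 1 1;
     -A 0 0, -A 1 0, 0, 0;
     -A 0 1, -A 1 1, 0, 0]

/-- The Fermi parametrisation of `S³` about the standard Clifford torus. -/
noncomputable def FermiPhi (θ φ r : ℝ) : Fin 4 → ℝ :=
  ![Real.sin (π/4 + r) * Real.cos θ, Real.sin (π/4 + r) * Real.sin θ,
    Real.sin (π/4 - r) * Real.cos φ, Real.sin (π/4 - r) * Real.sin φ]

lemma derivPhi_theta (θ φ r : ℝ) :
    HasDerivAt (fun θ' => FermiPhi θ' φ r)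
      ![Real.sin (π/4 + r) * (-Real.sin θ), Real.sin (π/4 + r) * Real.cos θ, 0, 0] θ := by
  rw [hasDerivAt_pi]
  intro i
  fin_cases i <;> simp [FermiPhi]
  · simpa using (Real.hasDerivAt_cos θ).const_mul (Real.sin (π/4 + r))
  · simpa using (Real.hasDerivAt_sin θ).const_mul (Real.sin (π/4 + r))
  · exact hasDerivAt_const _ _
  · exact hasDerivAt_const _ _

lemma derivPhi_phi (θ φ r : ℝ) :
    HasDerivAt (fun φ' => FermiPhi θ φ' r)
      ![0, 0, Real.sin (π/4 - r) * (-Real.sin φ), Real.sin (π/4 - r) * Real.cos φ] φ := by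
  rw [hasDerivAt_pi]
  intro i
  fin_cases i <;> simp [FermiPhi]
  · exact hasDerivAt_const _ _
  · exact hasDerivAt_const _ _
  · simpa using (Real.hasDerivAt_cos φ).const_mul (Real.sin (π/4 - r))
  · simpa using (Real.hasDerivAt_sin φ).const_mul (Real.sin (π/4 - r))

lemma derivPhi_r (θ φ r : ℝ) :
    HasDerivAt (fun r' => FermiPhi θ φ r')
      ![Real.cos (π/4 + r) * Real.cos θ, Real.cos (π/4 + r) * Real.sin θ,
        -Real.cos (π/4 - r) * Real.cos φ, -Real.cos (π/4 - r) * Real.sin φ] r := by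
  rw [hasDerivAt_pi]
  intro i
  have h1 : HasDerivAt (fun r' : ℝ => Real.sin (π/4 + r')) (Real.cos (π/4 + r)) r := by
    simpa [Function.comp_def] using (Real.hasDerivAt_sin (π/4 + r)).comp r ((hasDerivAt_id r).const_add (π/4))
  have h2 : HasDerivAt (fun r' : ℝ => Real.sin (π/4 - r')) (-Real.cos (π/4 - r)) r := by
    simpa [Function.comp_def] using (Real.hasDerivAt_sin (π/4 - r)).comp r ((hasDerivAt_id r).neg.const_add (π/4))
  fin_cases i <;> simp [FermiPhi]
  · simpa using h1.mul_const (Real.cos θ)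
  · simpa using h1.mul_const (Real.sin θ)
  · simpa using h2.mul_const (Real.cos φ)
  · simpa using h2.mul_const (Real.sin φ)

lemma derivPsi_theta (A : Matrix (Fin 2) (Fin 2) ℝ) (θ φ : ℝ) :
    HasDerivAt (fun θ' => psiFun A θ' φ)
      (A 0 0 * -Real.sin θ * Real.cos φ + A 0 1 * -Real.sin θ * Real.sin φ +
        A 1 0 * Real.cos θ * Real.cos φ + A 1 1 * Real.cos θ * Real.sin φ) θ := by
  unfold psiFun
  exact (((((Real.hasDerivAt_cos θ).const_mul (A 0 0)).mul_const _).add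
    ((((Real.hasDerivAt_cos θ).const_mul (A 0 1)).mul_const _))).add
    (((Real.hasDerivAt_sin θ).const_mul (A 1 0)).mul_const _)).add
    (((Real.hasDerivAt_sin θ).const_mul (A 1 1)).mul_const _)

lemma derivPsi_phi (A : Matrix (Fin 2) (Fin 2) ℝ) (θ φ : ℝ) :
    HasDerivAt (fun φ' => psiFun A θ φ')
      (A 0 0 * Real.cos θ * -Real.sin φ + A 0 1 * Real.cos θ * Real.cos φ +
        A 1 0 * Real.sin θ * -Real.sin φ + A 1 1 * Real.sin θ * Real.cos φ) φ := by
  unfold psiFun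
  exact ((((Real.hasDerivAt_cos φ).const_mul (A 0 0 * Real.cos θ)).add
    ((Real.hasDerivAt_sin φ).const_mul (A 0 1 * Real.cos θ))).add
    ((Real.hasDerivAt_cos φ).const_mul (A 1 0 * Real.sin θ))).add
    ((Real.hasDerivAt_sin φ).const_mul (A 1 1 * Real.sin θ))


theorem killing_field_fermi_formula (A : Matrix (Fin 2) (Fin 2) ℝ) (θ φ r : ℝ)
    (hr : r ∈ Set.Ioo (-(π/4)) (π/4)) :
    (xiMat A) *ᵥ FermiPhi θ φ r
      = (Real.cot (π/4 + r) * deriv (fun θ' => psiFun A θ' φ) θ)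
          • deriv (fun θ' => FermiPhi θ' φ r) θ
        - (Real.tan (π/4 + r) * deriv (fun φ' => psiFun A θ φ') φ)
          • deriv (fun φ' => FermiPhi θ φ' r) φ
        + psiFun A θ φ • deriv (fun r' => FermiPhi θ φ r') r := by
  obtain ⟨hr1, hr2⟩ := hr
  have hpi := Real.pi_pos
  have hs : Real.sin (π/4 + r) > 0 :=
    Real.sin_pos_of_pos_of_lt_pi (by linarith) (by linarith)
  have hc : Real.cos (π/4 + r) > 0 := Real.cos_pos_of_mem_Ioo ⟨by linarith, by linarith⟩
  have e1 : Real.sin (π/4 - r) = Real.cos (π/4 + r) := by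
    rw [← Real.sin_pi_div_two_sub]; ring_nf
  have e2 : Real.cos (π/4 - r) = Real.sin (π/4 + r) := by
    rw [← Real.sin_pi_div_two_sub]; ring_nf
  have hco : Real.cot (π/4 + r) = Real.cos (π/4 + r) / Real.sin (π/4 + r) :=
    Real.cot_eq_cos_div_sin _
  have ht : Real.tan (π/4 + r) = Real.sin (π/4 + r) / Real.cos (π/4 + r) :=
    Real.tan_eq_sin_div_cos _
  have hs0 : Real.sin (π/4 + r) ≠ 0 := ne_of_gt hs
  have hc0 : Real.cos (π/4 + r) ≠ 0 := ne_of_gt hc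
  rw [(derivPhi_theta θ φ r).deriv, (derivPhi_phi θ φ r).deriv, (derivPhi_r θ φ r).deriv,
    (derivPsi_theta A θ φ).deriv, (derivPsi_phi A θ φ).deriv]
  funext i
  fin_cases i <;>
    simp only [xiMat, FermiPhi, psiFun, mulVec, dotProduct, Fin.sum_univ_four, hco, ht, e1, e2,
      Pi.add_apply, Pi.sub_apply, Pi.smul_apply, smul_eq_mul, Matrix.cons_val_zero,
      Matrix.cons_val_one, Matrix.head_cons, Matrix.cons_val', Matrix.empty_val',
      Matrix.cons_val_fin_one, Matrix.head_fin_const, Matrix.of_apply, Fin.isValue, Matrix.cons_val, Fin.zero_eta, Fin.mk_one, Fin.reduceFinMk] <;>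
    (try set s := Real.sin (π/4 + r) with hsd) <;>
    (try set c := Real.cos (π/4 + r) with hcd) <;>
    field_simp <;> ring_nf <;> first
      | rfl
      | (simp only [Real.sin_sq]; ring)
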